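/- The matrix b(1/6) arising from the mean-square excess of the strong order one exponential Lie series (Magnus) integrator, namely the real symmetric 4×4 matrix b(1/6) = [[31/144, 5/72, 1/144, −1/24], [5/72, 1/36, 5/72, 0], [1/144, 5/72, 31/144, −1/24], [−1/24, 0, −1/24, 5/12]], has negative determinant; consequently it is not positive semidefinite and possesses a negative real eigenvalue. -/

import Mathlib

open Matrix

/-- The matrix `b(1/6)` arising from the mean-square excess of the strong order one
exponential Lie series (Magnus) integrator. -/
noncomputable def bSixth : Matrix (Fin 4) (Fin 4) ℝ :=
  !![31/144, 5/72, 1/144, -1/24;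
     5/72, 1/36, 5/72, 0;
     1/144, 5/72, 31/144, -1/24;
     -1/24, 0, -1/24, 5/12]

lemma bSixth_isHermitian : bSixth.IsHermitian := by
  ext i j
  fin_cases i <;> fin_cases j <;> simp [bSixth, Matrix.conjTranspose_apply]

lemma bSixth_det : bSixth.det = -5/15552 := by
  simp [bSixth, Matrix.det_succ_row_zero, Fin.sum_univ_succ, Fin.succAbove]
  norm_num

/-- `b(1/6)` has negative determinant; consequently it is not positive semidefinite
(`xᵀ b(1/6) x ≥ 0` fails for some `x ∈ ℝ⁴`) and it possesses a negative real
eigenvalue. -/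
theorem bSixth_det_neg_not_posSemidef :
    bSixth.det < 0 ∧
      ¬(∀ x : Fin 4 → ℝ, 0 ≤ x ⬝ᵥ bSixth.mulVec x) ∧
      ∃ μ : ℝ, μ < 0 ∧ Module.End.HasEigenvalue (Matrix.toLin' bSixth) μ := by
  have hdet : bSixth.det < 0 := by rw [bSixth_det]; norm_num
  refine ⟨hdet, ?_, ?_⟩
  · intro h
    have := h ![1, -3, 1, 0]
    simp [bSixth, Matrix.mulVec, dotProduct, Fin.sum_univ_four] at this
    norm_num at this
  · have hA := bSixth_isHermitian
    have hprod : (∏ i, hA.eigenvalues i : ℝ) < 0 := by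
      have := hA.det_eq_prod_eigenvalues
      push_cast at this
      rw [this] at hdet
      exact_mod_cast hdet
    have : ∃ i, hA.eigenvalues i < 0 := by
      by_contra hc
      push_neg at hc
      exact absurd (Finset.prod_nonneg fun i _ => hc i) (not_le.2 hprod)
    obtain ⟨i, hi⟩ := this
    refine ⟨hA.eigenvalues i, hi, ?_⟩
    apply Module.End.hasEigenvalue_of_hasEigenvector
      (x := ((hA.eigenvectorBasis i : EuclideanSpace ℝ (Fin 4)) : Fin 4 → ℝ))
    constructor
    · rw [Module.End.mem_eigenspace_iff]
      have h := hA.mulVec_eigenvectorBasis i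
      ext j
      have := congrFun h j
      simpa [Matrix.toLin'_apply] using this
    · simpa using hA.eigenvectorBasis.toBasis.ne_zero i
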